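/- arXiv:1102.4226 — 2 statements merged into one kernel-verified Lean document; each statement's English description precedes it below -/
import Mathlib

section
/- Möbius-type inversion for pattern counts: for functions f, g : S → ℂ on the set of all permutations, f(π) = ∑_{σ ≤ π} g(σ) · occ(σ, π) for all π if and only if g(π) = ∑_{σ ≤ π} (-1)^{|π|-|σ|} f(σ) · occ(σ, π) for all π, where occ(σ, π) is the number of occurrences of the classical pattern σ in π. -/
open Finset

/-- Number of occurrences of the classical pattern `σ` in `τ`. -/
def occ {k n : ℕ} (σ : Equiv.Perm (Fin k)) (τ : Equiv.Perm (Fin n)) : ℕ :=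
  (univ.filter fun f : Fin k → Fin n =>
    (∀ i j : Fin k, i < j → f i < f j) ∧
    (∀ i j : Fin k, σ i < σ j ↔ τ (f i) < τ (f j))).card

/-- The set of all finite permutations. -/
def Perms := Σ n : ℕ, Equiv.Perm (Fin n)

namespace PatInv

variable {n m k : ℕ}

/-- strictly monotone maps as a finset -/
def monos (k n : ℕ) : Finset (Fin k → Fin n) :=
  univ.filter fun f => ∀ i j : Fin k, i < j → f i < f j

lemma mem_monos {f : Fin k → Fin n} : f ∈ monos k n ↔ StrictMono f := by
  constructor
  · intro h a b hab
    exact (mem_filter.mp h).2 a b hab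
  · intro h
    exact mem_filter.mpr ⟨mem_univ _, fun a b hab => h hab⟩

lemma monos_eq_empty (h : m < k) : monos k m = ∅ := by
  rw [eq_empty_iff_forall_notMem]
  intro f hf
  have := Fintype.card_le_of_injective f (mem_monos.mp hf).injective
  simp only [Fintype.card_fin] at this
  omega

lemma monos_self : monos n n = {id} := by
  ext f
  rw [mem_monos, mem_singleton]
  constructor
  · intro hf
    have h : (univ : Finset (Fin n)).card = n := by simp
    rw [Finset.orderEmbOfFin_unique h (fun x => mem_univ _) hf,
      Finset.orderEmbOfFin_unique h (fun x => mem_univ (id x)) strictMono_id]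
  · rintro rfl; exact strictMono_id

def img (π : Equiv.Perm (Fin n)) (f : Fin m → Fin n) : Finset (Fin n) :=
  univ.image fun i => π (f i)

lemma card_img {π : Equiv.Perm (Fin n)} {f : Fin m → Fin n}
    (h : Function.Injective fun i => π (f i)) : (img π f).card = m := by
  rw [img, card_image_of_injective _ h, card_univ, Fintype.card_fin]

noncomputable def pattAux (π : Equiv.Perm (Fin n)) (f : Fin m → Fin n)
    (h : Function.Injective fun i => π (f i)) : Equiv.Perm (Fin m) :=
  Equiv.ofBijective
    (fun i => ((img π f).orderIsoOfFin (card_img h)).symm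
      ⟨π (f i), mem_image_of_mem _ (mem_univ i)⟩)
    (by
      rw [Fintype.bijective_iff_injective_and_card]
      refine ⟨fun a b hab => ?_, rfl⟩
      have h2 := ((img π f).orderIsoOfFin (card_img h)).symm.injective hab
      exact h (congrArg Subtype.val h2))

lemma pattAux_lt {π : Equiv.Perm (Fin n)} {f : Fin m → Fin n}
    (h : Function.Injective fun i => π (f i)) (i j : Fin m) :
    pattAux π f h i < pattAux π f h j ↔ π (f i) < π (f j) := by
  show ((img π f).orderIsoOfFin (card_img h)).symm _ <
    ((img π f).orderIsoOfFin (card_img h)).symm _ ↔ _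
  rw [OrderIso.lt_iff_lt]
  exact Iff.rfl

noncomputable def pattOf (π : Equiv.Perm (Fin n)) (f : Fin m → Fin n) : Equiv.Perm (Fin m) :=
  if h : Function.Injective fun i => π (f i) then pattAux π f h else 1

lemma pattOf_lt {π : Equiv.Perm (Fin n)} {f : Fin m → Fin n} (hf : StrictMono f) (i j : Fin m) :
    pattOf π f i < pattOf π f j ↔ π (f i) < π (f j) := by
  have h : Function.Injective fun i => π (f i) := fun a b hab =>
    hf.injective (π.injective hab)
  rw [pattOf, dif_pos h]
  exact pattAux_lt h i j

lemma strictMono_fin_id {f : Fin m → Fin m} (hf : StrictMono f) : f = id := by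
  have h : (univ : Finset (Fin m)).card = m := by simp
  rw [Finset.orderEmbOfFin_unique h (fun x => mem_univ _) hf,
    Finset.orderEmbOfFin_unique h (fun x => mem_univ (id x)) strictMono_id]

lemma perm_eq_of_lt_iff {σ τ : Equiv.Perm (Fin m)} (h : ∀ i j, σ i < σ j ↔ τ i < τ j) :
    σ = τ := by
  have hsm : StrictMono fun i => τ (σ.symm i) := by
    intro a b hab
    exact (h (σ.symm a) (σ.symm b)).mp (by simpa using hab)
  have hid := strictMono_fin_id hsm
  refine Equiv.ext fun i => ?_
  have := congrFun hid (σ i)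
  simp only [Equiv.symm_apply_apply, id_eq] at this
  exact this.symm

lemma pattOf_eq_iff {π : Equiv.Perm (Fin n)} {f : Fin m → Fin n} (hf : StrictMono f)
    {σ : Equiv.Perm (Fin m)} :
    pattOf π f = σ ↔ ∀ i j, σ i < σ j ↔ π (f i) < π (f j) := by
  constructor
  · rintro rfl i j
    exact pattOf_lt hf i j
  · intro h
    refine perm_eq_of_lt_iff fun i j => ?_
    rw [pattOf_lt hf, h i j]

lemma pattOf_comp {π : Equiv.Perm (Fin n)} {f : Fin m → Fin n} {h : Fin k → Fin m}
    (hf : StrictMono f) (hh : StrictMono h) :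
    pattOf π (f ∘ h) = pattOf (pattOf π f) h := by
  rw [pattOf_eq_iff (hf.comp hh)]
  intro i j
  rw [pattOf_lt hh, pattOf_lt hf]
  rfl

lemma pattOf_id {π : Equiv.Perm (Fin n)} : pattOf π id = π := by
  rw [pattOf_eq_iff strictMono_id]
  exact fun i j => Iff.rfl


lemma occ_eq (σ : Equiv.Perm (Fin m)) (π : Equiv.Perm (Fin n)) [DecidableEq (Equiv.Perm (Fin m))] :
    occ σ π = ((monos m n).filter fun f => pattOf π f = σ).card := by
  rw [occ, monos, filter_filter]
  congr 1
  apply filter_congr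
  intro f _
  constructor
  · rintro ⟨h1, h2⟩
    have hsm : StrictMono f := fun a b hab => h1 a b hab
    exact ⟨h1, (pattOf_eq_iff hsm).mpr fun i j => (h2 i j)⟩
  · rintro ⟨h1, h2⟩
    have hsm : StrictMono f := fun a b hab => h1 a b hab
    exact ⟨h1, (pattOf_eq_iff hsm).mp h2⟩

lemma sum_occ (F : Equiv.Perm (Fin m) → ℂ) (π : Equiv.Perm (Fin n)) :
    ∑ σ : Equiv.Perm (Fin m), F σ * (occ σ π : ℂ) = ∑ f ∈ monos m n, F (pattOf π f) := by
  classical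
  rw [← sum_fiberwise_of_maps_to' (g := fun f => pattOf π f)
    (fun f _ => mem_univ (pattOf π f)) F]
  refine sum_congr rfl fun σ _ => ?_
  rw [occ_eq σ π, sum_const, nsmul_eq_mul, mul_comm]

lemma comp_bij (p : Equiv.Perm (Fin n)) (G : Perms → ℂ) {fm : Fin m → Fin n}
    (hfm : fm ∈ monos m n) (k : ℕ) [DecidableEq (Fin k → Fin n)] :
    ∑ h ∈ monos k m, G ⟨k, pattOf p (fm ∘ h)⟩
    = ∑ e ∈ (monos k n).filter (fun e => univ.image e ⊆ univ.image fm),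
        G ⟨k, pattOf p e⟩ := by
  classical
  have hsm := mem_monos.mp hfm
  have hinj := hsm.injective
  have hmem : ∀ (e : Fin k → Fin n), e ∈ (monos k n).filter
      (fun e => univ.image e ⊆ univ.image fm) → ∀ i, e i ∈ Set.range fm := by
    intro e he i
    have := (mem_filter.mp he).2 (mem_image_of_mem e (mem_univ i))
    obtain ⟨j, _, hj⟩ := mem_image.mp this
    exact ⟨j, hj⟩
  refine sum_bij' (fun h _ => fm ∘ h)
    (fun e he => fun i => (Equiv.ofInjective fm hinj).symm ⟨e i, hmem e he i⟩) ?_ ?_ ?_ ?_ ?_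
  · intro h hh
    rw [mem_filter]
    refine ⟨mem_monos.mpr (hsm.comp (mem_monos.mp hh)), ?_⟩
    intro x hx
    obtain ⟨i, _, rfl⟩ := mem_image.mp hx
    exact mem_image_of_mem _ (mem_univ _)
  · intro e he
    refine mem_monos.mpr fun a b hab => ?_
    have h1 : ∀ i, fm ((Equiv.ofInjective fm hinj).symm ⟨e i, hmem e he i⟩) = e i := fun i =>
      Equiv.apply_ofInjective_symm hinj _
    have : fm ((Equiv.ofInjective fm hinj).symm ⟨e a, hmem e he a⟩)
        < fm ((Equiv.ofInjective fm hinj).symm ⟨e b, hmem e he b⟩) := by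
      rw [h1, h1]
      exact (mem_monos.mp ((mem_filter.mp he).1)) hab
    exact hsm.lt_iff_lt.mp this
  · intro h hh
    funext i
    apply hinj
    rw [Equiv.apply_ofInjective_symm hinj]
    rfl
  · intro e he
    funext i
    exact Equiv.apply_ofInjective_symm hinj _
  · intro h _
    rfl

lemma sum_monos_eq (F : Finset (Fin n) → ℂ) (m : ℕ) :
    ∑ f ∈ monos m n, F (univ.image f) = ∑ S ∈ powersetCard m (univ : Finset (Fin n)), F S := by
  classical
  refine sum_bij' (fun f _ => univ.image f)
    (fun S hS => ⇑(S.orderEmbOfFin (mem_powersetCard.mp hS).2)) ?_ ?_ ?_ ?_ ?_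
  · intro f hf
    rw [mem_powersetCard]
    exact ⟨subset_univ _, by
      rw [card_image_of_injective _ (mem_monos.mp hf).injective, card_univ, Fintype.card_fin]⟩
  · intro S hS
    exact mem_monos.mpr (S.orderEmbOfFin _).strictMono
  · intro f hf
    exact (Finset.orderEmbOfFin_unique _ (fun x => mem_image_of_mem f (mem_univ x))
      (mem_monos.mp hf)).symm
  · intro S hS
    have : Set.range (S.orderEmbOfFin (mem_powersetCard.mp hS).2) = ↑S :=
      Finset.range_orderEmbOfFin S _
    rw [← coe_inj, coe_image, coe_univ, Set.image_univ, this]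
  · intro f _
    rfl


lemma neg_one_pow_sub (h : k ≤ m) : (-1:ℂ)^(m-k) = (-1:ℂ)^m * (-1:ℂ)^k := by
  have h1 : (-1:ℂ)^(m-k) * (-1:ℂ)^k = (-1:ℂ)^m := by
    rw [← pow_add, Nat.sub_add_cancel h]
  have h2 : (-1:ℂ)^k * (-1:ℂ)^k = 1 := by
    rw [← mul_pow]; norm_num
  calc (-1:ℂ)^(m-k) = (-1:ℂ)^(m-k) * ((-1:ℂ)^k * (-1:ℂ)^k) := by rw [h2, mul_one]
    _ = (-1:ℂ)^m * (-1:ℂ)^k := by rw [← mul_assoc, h1]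

lemma sum_pow_card_powerset (x : Finset (Fin n)) :
    ∑ U ∈ x.powerset, (-1:ℂ)^U.card = if x = ∅ then 1 else 0 := by
  have h := Finset.sum_powerset_neg_one_pow_card (x := x)
  have : ∑ U ∈ x.powerset, (-1:ℂ)^U.card = ((∑ U ∈ x.powerset, (-1:ℤ)^U.card : ℤ) : ℂ) := by
    push_cast
    rfl
  rw [this, h]
  split <;> norm_num

lemma delta0 (T : Finset (Fin n)) (hT : T ≠ univ) :
    ∑ S ∈ (univ : Finset (Fin n)).powerset.filter (fun S => T ⊆ S), (-1:ℂ)^S.card = 0 := by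
  classical
  have key : ∑ S ∈ (univ : Finset (Fin n)).powerset.filter (fun S => T ⊆ S), (-1:ℂ)^S.card
      = ∑ U ∈ ((univ : Finset (Fin n)) \ T).powerset, (-1:ℂ)^(U.card + T.card) := by
    refine sum_nbij' (fun S => S \ T) (fun U => U ∪ T) ?_ ?_ ?_ ?_ ?_
    · intro S hS
      rw [mem_powerset]
      exact sdiff_subset_sdiff (mem_powerset.mp (mem_filter.mp hS).1) Subset.rfl
    · intro U hU
      rw [mem_filter, mem_powerset]
      exact ⟨subset_univ _, subset_union_right⟩
    · intro S hS
      exact sdiff_union_of_subset (mem_filter.mp hS).2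
    · intro U hU
      have hdisj : Disjoint U T :=
        disjoint_of_subset_left (mem_powerset.mp hU) sdiff_disjoint
      show (U ∪ T) \ T = U
      rw [union_sdiff_right, hdisj.sdiff_eq_left]
    · intro S hS
      rw [card_sdiff_add_card_eq_card (mem_filter.mp hS).2]
  rw [key]
  have e1 : ∀ U ∈ ((univ : Finset (Fin n)) \ T).powerset,
      (-1:ℂ)^(U.card + T.card) = (-1:ℂ)^U.card * (-1:ℂ)^T.card := fun U _ => by rw [pow_add]
  rw [sum_congr rfl e1, ← sum_mul, sum_pow_card_powerset, if_neg, zero_mul]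
  intro hc
  exact hT (univ_subset_iff.mp (sdiff_eq_empty_iff_subset.mp hc))

lemma master (p : Equiv.Perm (Fin n)) (w : ℕ → ℂ) (G : Perms → ℂ)
    (hD : ∀ T : Finset (Fin n), T ≠ univ →
      ∑ S ∈ (univ : Finset (Fin n)).powerset.filter (fun S => T ⊆ S), w S.card = 0) :
    ∑ m ∈ range (n+1), w m * ∑ fm ∈ monos m n, ∑ k ∈ range (m+1), ∑ h ∈ monos k m,
      G ⟨k, pattOf p (fm ∘ h)⟩ = w n * G ⟨n, p⟩ := by
  classical
  set Φ : Finset (Fin n) → ℂ := fun S => ∑ k ∈ range (n+1),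
    ∑ e ∈ (monos k n).filter (fun e => univ.image e ⊆ S), G ⟨k, pattOf p e⟩ with hΦ
  have step1 : ∀ m ∈ range (n+1), ∀ fm ∈ monos m n,
      ∑ k ∈ range (m+1), ∑ h ∈ monos k m, G ⟨k, pattOf p (fm ∘ h)⟩
      = Φ (univ.image fm) := by
    intro m hm fm hfm
    simp only [hΦ]
    have hsub : range (m+1) ⊆ range (n+1) := by
      rw [mem_range] at hm
      exact range_subset_range.mpr (by omega)
    rw [← sum_subset hsub (fun x hx hx' => ?_)]
    · exact sum_congr rfl fun k _ => comp_bij p G hfm k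
    · rw [mem_range] at hx hx'
      have hmx : m < x := by omega
      apply sum_eq_zero
      intro e he
      rw [mem_filter] at he
      have h1 : (univ.image e).card = x := by
        rw [card_image_of_injective _ (mem_monos.mp he.1).injective, card_univ,
          Fintype.card_fin]
      have h2 : (univ.image fm).card = m := by
        rw [card_image_of_injective _ (mem_monos.mp hfm).injective, card_univ,
          Fintype.card_fin]
      have := card_le_card he.2
      omega
  have L1 : ∑ m ∈ range (n+1), w m * ∑ fm ∈ monos m n, ∑ k ∈ range (m+1),
      ∑ h ∈ monos k m, G ⟨k, pattOf p (fm ∘ h)⟩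
      = ∑ m ∈ range (n+1), w m * ∑ S ∈ powersetCard m (univ : Finset (Fin n)), Φ S := by
    refine sum_congr rfl fun m hm => ?_
    congr 1
    rw [← sum_monos_eq Φ m]
    exact sum_congr rfl fun fm hfm => step1 m hm fm hfm
  have L2 : ∑ S ∈ (univ : Finset (Fin n)).powerset, w S.card * Φ S
      = ∑ m ∈ range (n+1), w m * ∑ S ∈ powersetCard m (univ : Finset (Fin n)), Φ S := by
    rw [powerset_card_disjiUnion (univ : Finset (Fin n))]
    refine (sum_disjiUnion ..).trans ?_
    have hc : (univ : Finset (Fin n)).card = n := by simp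
    rw [hc]
    refine sum_congr rfl fun m _ => ?_
    rw [mul_sum]
    exact sum_congr rfl fun S hS => by rw [(mem_powersetCard.mp hS).2]
  have L3 : ∑ S ∈ (univ : Finset (Fin n)).powerset, w S.card * Φ S
      = ∑ k ∈ range (n+1), ∑ e ∈ monos k n,
          (∑ S ∈ (univ : Finset (Fin n)).powerset.filter (fun S => univ.image e ⊆ S), w S.card)
          * G ⟨k, pattOf p e⟩ := by
    have e1 : ∀ S ∈ (univ : Finset (Fin n)).powerset, w S.card * Φ S
        = ∑ k ∈ range (n+1), ∑ e ∈ monos k n,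
          ite (univ.image e ⊆ S) (w S.card * G ⟨k, pattOf p e⟩) 0 := by
      intro S _
      simp only [hΦ, mul_sum]
      refine sum_congr rfl fun k _ => ?_
      rw [sum_filter]
    rw [sum_congr rfl e1, sum_comm]
    refine sum_congr rfl fun k _ => ?_
    rw [sum_comm]
    refine sum_congr rfl fun e _ => ?_
    rw [sum_filter, sum_mul]
    refine sum_congr rfl fun S _ => ?_
    split <;> simp
  have L4 : ∀ k, k ∈ range (n+1) → ∀ e ∈ monos k n,
      (∑ S ∈ (univ : Finset (Fin n)).powerset.filter (fun S => univ.image e ⊆ S), w S.card)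
      = if univ.image e = univ then w n else 0 := by
    intro k _ e _
    by_cases hTe : univ.image e = univ
    · rw [if_pos hTe, hTe]
      have hsingle : (univ : Finset (Fin n)).powerset.filter (fun S => univ ⊆ S) = {univ} := by
        ext S
        simp only [mem_filter, mem_powerset, mem_singleton]
        constructor
        · rintro ⟨h1, h2⟩
          exact subset_antisymm h1 h2
        · rintro rfl
          exact ⟨Subset.rfl, Subset.rfl⟩
      rw [hsingle, sum_singleton, card_univ, Fintype.card_fin]
    · rw [if_neg hTe]
      exact hD _ hTe
  rw [L1, ← L2, L3]
  rw [sum_congr rfl (fun k hk => sum_congr rfl (fun e he => by rw [L4 k hk e he]))]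
  rw [Finset.sum_eq_single n]
  · rw [monos_self, sum_singleton]
    have himg : univ.image (id : Fin n → Fin n) = univ := by
      simp
    rw [if_pos himg, pattOf_id]
  · intro k hk hkn
    apply sum_eq_zero
    intro e he
    rw [if_neg, zero_mul]
    intro hc
    have hcard : (univ.image e).card = k := by
      rw [card_image_of_injective _ (mem_monos.mp he).injective, card_univ, Fintype.card_fin]
    rw [hc, card_univ, Fintype.card_fin] at hcard
    exact hkn hcard.symm
  · intro hn
    exact absurd (self_mem_range_succ n) hn


lemma expand_plain {F G : Perms → ℂ}
    (H : ∀ π : Perms, F π = ∑ m ∈ range (π.1 + 1), ∑ σ : Equiv.Perm (Fin m),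
      G ⟨m, σ⟩ * (occ σ π.2 : ℂ)) (p : Equiv.Perm (Fin n)) :
    F ⟨n, p⟩ = ∑ m ∈ range (n+1), ∑ fm ∈ monos m n, G ⟨m, pattOf p fm⟩ := by
  rw [H ⟨n, p⟩]
  exact sum_congr rfl fun m _ => sum_occ (fun σ => G ⟨m, σ⟩) p

theorem pattern_inversion' (f g : Perms → ℂ) :
    (∀ π : Perms, f π =
        ∑ m ∈ range (π.1 + 1), ∑ σ : Equiv.Perm (Fin m),
          g ⟨m, σ⟩ * (occ σ π.2 : ℂ)) ↔
    (∀ π : Perms, g π =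
        ∑ m ∈ range (π.1 + 1), ∑ σ : Equiv.Perm (Fin m),
          (-1 : ℂ) ^ (π.1 - m) * f ⟨m, σ⟩ * (occ σ π.2 : ℂ)) := by
  constructor
  · intro H1 π
    obtain ⟨n, p⟩ := π
    show g ⟨n, p⟩ = ∑ m ∈ range (n+1), ∑ σ : Equiv.Perm (Fin m),
      (-1:ℂ)^(n-m) * f ⟨m, σ⟩ * (occ σ p : ℂ)
    have hD2 : ∀ T : Finset (Fin n), T ≠ univ →
        ∑ S ∈ (univ : Finset (Fin n)).powerset.filter (fun S => T ⊆ S),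
          (-1:ℂ)^(n - S.card) = 0 := by
      intro T hT
      have e : ∀ S ∈ (univ : Finset (Fin n)).powerset.filter (fun S => T ⊆ S),
          (-1:ℂ)^(n - S.card) = (-1:ℂ)^n * (-1:ℂ)^S.card := by
        intro S hS
        refine neg_one_pow_sub ?_
        have := card_le_card (mem_powerset.mp (mem_filter.mp hS).1)
        simpa using this
      rw [sum_congr rfl e, ← mul_sum, delta0 T hT, mul_zero]
    have e1 : ∀ m ∈ range (n+1), (∑ σ : Equiv.Perm (Fin m),
          (-1:ℂ)^(n-m) * f ⟨m, σ⟩ * (occ σ p : ℂ))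
        = (-1:ℂ)^(n-m) * ∑ fm ∈ monos m n, ∑ k ∈ range (m+1), ∑ h ∈ monos k m,
            g ⟨k, pattOf p (fm ∘ h)⟩ := by
      intro m _
      rw [sum_occ (fun σ => (-1:ℂ)^(n-m) * f ⟨m, σ⟩) p, mul_sum]
      refine sum_congr rfl fun fm hfm => ?_
      congr 1
      rw [expand_plain H1 (pattOf p fm)]
      refine sum_congr rfl fun k _ => sum_congr rfl fun h hh => ?_
      rw [pattOf_comp (mem_monos.mp hfm) (mem_monos.mp hh)]
    rw [sum_congr rfl e1]
    have hm := master p (fun m => (-1:ℂ)^(n-m)) g hD2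
    refine ((hm.trans ?_)).symm
    show (-1:ℂ)^(n-n) * g ⟨n, p⟩ = g ⟨n, p⟩
    rw [Nat.sub_self, pow_zero, one_mul]
  · intro H2 π
    obtain ⟨n, p⟩ := π
    show f ⟨n, p⟩ = ∑ m ∈ range (n+1), ∑ σ : Equiv.Perm (Fin m),
      g ⟨m, σ⟩ * (occ σ p : ℂ)
    have expand_signed : ∀ (m : ℕ) (σ' : Equiv.Perm (Fin m)), g ⟨m, σ'⟩
        = ∑ k ∈ range (m+1), ∑ h ∈ monos k m, (-1:ℂ)^(m-k) * f ⟨k, pattOf σ' h⟩ := by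
      intro m σ'
      rw [H2 ⟨m, σ'⟩]
      exact sum_congr rfl fun k _ => sum_occ (fun τ => (-1:ℂ)^(m-k) * f ⟨k, τ⟩) σ'
    have e1 : ∀ m ∈ range (n+1), (∑ σ : Equiv.Perm (Fin m), g ⟨m, σ⟩ * (occ σ p : ℂ))
        = (-1:ℂ)^m * ∑ fm ∈ monos m n, ∑ k ∈ range (m+1), ∑ h ∈ monos k m,
            (-1:ℂ)^k * f ⟨k, pattOf p (fm ∘ h)⟩ := by
      intro m _
      rw [sum_occ (fun σ => g ⟨m, σ⟩) p]
      simp only [mul_sum]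
      refine sum_congr rfl fun fm hfm => ?_
      rw [expand_signed m (pattOf p fm)]
      refine sum_congr rfl fun k hk => sum_congr rfl fun h hh => ?_
      rw [pattOf_comp (mem_monos.mp hfm) (mem_monos.mp hh)]
      rw [neg_one_pow_sub (by rw [mem_range] at hk; omega), mul_assoc]
    rw [sum_congr rfl e1]
    have hm := master p (fun m => (-1:ℂ)^m) (fun q => (-1:ℂ)^q.1 * f q)
      (fun T hT => delta0 T hT)
    refine ((hm.trans ?_)).symm
    show (-1:ℂ)^n * ((-1:ℂ)^n * f ⟨n, p⟩) = f ⟨n, p⟩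
    rw [← mul_assoc, ← mul_pow]
    norm_num

end PatInv


/-- Möbius-type inversion for pattern counts: for `f, g : S → ℂ`,
`f(π) = ∑_{σ ≤ π} g(σ)·occ(σ,π)` for all `π` iff
`g(π) = ∑_{σ ≤ π} (-1)^{|π|-|σ|} f(σ)·occ(σ,π)` for all `π`.
Only patterns `σ` with `|σ| ≤ |π|` contribute, so the sums range over all
permutations of each size `m ≤ |π|` (terms with `σ ≰ π` have `occ(σ,π) = 0`). -/
theorem pattern_inversion (f g : Perms → ℂ) :
    (∀ π : Perms, f π =
        ∑ m ∈ range (π.1 + 1), ∑ σ : Equiv.Perm (Fin m),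
          g ⟨m, σ⟩ * (occ σ π.2 : ℂ)) ↔
    (∀ π : Perms, g π =
        ∑ m ∈ range (π.1 + 1), ∑ σ : Equiv.Perm (Fin m),
          (-1 : ℂ) ^ (π.1 - m) * f ⟨m, σ⟩ * (occ σ π.2 : ℂ)) := by
  exact PatInv.pattern_inversion' f g
end

section
/- The number of strong fixed points of any permutation τ equals ∑_π (-1)^{|π|-1} · ssfix(π) · occ(π, τ), summed over all nonempty permutations π, where ssfix(π) is the number of skew strong fixed points of π and occ(π, τ) counts classical occurrences of π in τ. -/
open Finset

/-- The number of strong fixed points of `τ`: positions `j` with `τ(i) < τ(j)` for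
all `i < j` and `τ(j) < τ(i)` for all `i > j`. -/
def sfix {n : ℕ} (τ : Equiv.Perm (Fin n)) : ℕ :=
  (univ.filter fun j : Fin n =>
    (∀ i : Fin n, i < j → τ i < τ j) ∧ (∀ i : Fin n, j < i → τ j < τ i)).card

/-- The number of skew strong fixed points of `τ`: positions `j` with `τ(j) < τ(i)`
for all `i < j` and `τ(i) < τ(j)` for all `i > j`. -/
def ssfix {n : ℕ} (τ : Equiv.Perm (Fin n)) : ℕ :=
  (univ.filter fun j : Fin n =>
    (∀ i : Fin n, i < j → τ j < τ i) ∧ (∀ i : Fin n, j < i → τ i < τ j)).card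

lemma perm_eq_of_lt_iff {k : ℕ} (π π' : Equiv.Perm (Fin k))
    (h : ∀ i j, π i < π j ↔ π' i < π' j) : π = π' := by
  have hm : StrictMono (⇑(π.symm.trans π')) := by
    intro a b hab
    simp only [Equiv.trans_apply]
    rw [← h]
    simpa using hab
  have hid : StrictMono (id : Fin k → Fin k) := strictMono_id
  have hr : Set.range (⇑(π.symm.trans π')) = Set.range (id : Fin k → Fin k) := by
    rw [Set.range_id]
    exact Set.range_eq_univ.2 (π.symm.trans π').surjective
  have hwf : WellFoundedLT (Fin k) := inferInstance
  have heq := (@StrictMono.range_inj (Fin k) (Fin k) _ _ hwf _ _ hm hid).1 hr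
  ext i
  have h1 := congrFun heq (π i)
  have h2 : π' i = π i := by simpa using h1
  exact congrArg Fin.val h2.symm

lemma exists_pattern {k n : ℕ} (g : Fin k → Fin n) (hg : Function.Injective g) :
    ∃ π : Equiv.Perm (Fin k), ∀ i j, π i < π j ↔ g i < g j := by
  classical
  set s : Finset (Fin n) := univ.image g with hs
  have hcard : s.card = k := by
    rw [hs, card_image_of_injective _ hg, card_univ, Fintype.card_fin]
  let e := s.orderIsoOfFin hcard
  have hmem : ∀ i, g i ∈ s := fun i => mem_image_of_mem g (mem_univ i)
  let p : Fin k → Fin k := fun i => e.symm ⟨g i, hmem i⟩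
  have hpinj : Function.Injective p := by
    intro a b hab
    apply hg
    have := congrArg e hab
    simpa [p, Subtype.ext_iff] using this
  refine ⟨Equiv.ofBijective p ((Fintype.bijective_iff_injective_and_card p).2 ⟨hpinj, rfl⟩), ?_⟩
  intro i j
  show p i < p j ↔ _
  exact (e.symm.lt_iff_lt).trans Subtype.mk_lt_mk

/-- the set of "violating" positions for `x` being a strong fixed point -/
def badSet {n : ℕ} (τ : Equiv.Perm (Fin n)) (x : Fin n) : Finset (Fin n) :=
  univ.filter fun i => (i < x ∧ τ x < τ i) ∨ (x < i ∧ τ i < τ x)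

lemma claimA {n : ℕ} (τ : Equiv.Perm (Fin n)) (m : ℕ) :
    ∑ π : Equiv.Perm (Fin (m + 1)), ssfix π * occ π τ
      = ∑ x : Fin n, ((badSet τ x).powersetCard m).card := by
  classical
  have hL : ∑ π : Equiv.Perm (Fin (m + 1)), ssfix π * occ π τ
      = ((univ : Finset (Equiv.Perm (Fin (m+1)))).sigma fun π =>
          (univ.filter fun j : Fin (m+1) =>
            (∀ i : Fin (m+1), i < j → π j < π i) ∧ (∀ i : Fin (m+1), j < i → π i < π j)) ×ˢ
          (univ.filter fun f : Fin (m+1) → Fin n =>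
            (∀ i j : Fin (m+1), i < j → f i < f j) ∧
            (∀ i j : Fin (m+1), π i < π j ↔ τ (f i) < τ (f j)))).card := by
    rw [card_sigma]
    simp [ssfix, occ, card_product]
  have hR : ∑ x : Fin n, ((badSet τ x).powersetCard m).card
      = ((univ : Finset (Fin n)).sigma fun x => (badSet τ x).powersetCard m).card := by
    rw [card_sigma]
  rw [hL, hR]
  apply card_bij (fun p _ => (⟨p.2.2 p.2.1, (univ.image p.2.2).erase (p.2.2 p.2.1)⟩ :
      Σ _ : Fin n, Finset (Fin n)))
  · rintro ⟨π, j, f⟩ hp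
    simp only [mem_sigma, mem_product, mem_filter, mem_univ, true_and] at hp
    obtain ⟨⟨hj1, hj2⟩, hf1, hf2⟩ := hp
    have hmono : StrictMono f := fun a b h => hf1 a b h
    simp only [mem_sigma, mem_univ, true_and, mem_powersetCard]
    constructor
    · intro y hy
      simp only [mem_erase, mem_image, mem_univ, true_and] at hy
      obtain ⟨hne, i, rfl⟩ := hy
      have hij : i ≠ j := fun h => hne (by rw [h])
      simp only [badSet, mem_filter, mem_univ, true_and]
      rcases hij.lt_or_gt with h | h
      · exact Or.inl ⟨hmono h, (hf2 j i).1 (hj1 i h)⟩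
      · exact Or.inr ⟨hmono h, (hf2 i j).1 (hj2 i h)⟩
    · rw [card_erase_of_mem (mem_image_of_mem f (mem_univ j)),
        card_image_of_injective _ hmono.injective, card_univ, Fintype.card_fin]
      rfl
  · rintro ⟨π₁, j₁, f₁⟩ hp₁ ⟨π₂, j₂, f₂⟩ hp₂ heq
    simp only [mem_sigma, mem_product, mem_filter, mem_univ, true_and] at hp₁ hp₂
    obtain ⟨⟨hj1, hj2⟩, hf1, hf2⟩ := hp₁
    obtain ⟨⟨hj1', hj2'⟩, hf1', hf2'⟩ := hp₂
    have hmono : StrictMono f₁ := fun a b h => hf1 a b h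
    have hmono' : StrictMono f₂ := fun a b h => hf1' a b h
    simp only [Sigma.mk.inj_iff, heq_eq_eq] at heq
    obtain ⟨hx, hS⟩ := heq
    have himg : univ.image f₁ = univ.image f₂ := by
      have h1 : univ.image f₁ = insert (f₁ j₁) ((univ.image f₁).erase (f₁ j₁)) :=
        (insert_erase (mem_image_of_mem f₁ (mem_univ j₁))).symm
      have h2 : univ.image f₂ = insert (f₂ j₂) ((univ.image f₂).erase (f₂ j₂)) :=
        (insert_erase (mem_image_of_mem f₂ (mem_univ j₂))).symm
      rw [h1, h2, hS, hx]
    have hfeq : f₁ = f₂ := by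
      have hwf : WellFoundedLT (Fin (m+1)) := inferInstance
      apply (@StrictMono.range_inj (Fin (m+1)) (Fin n) _ _ hwf _ _ hmono hmono').1
      have hc : ∀ (f : Fin (m+1) → Fin n), Set.range f = ↑(univ.image f) := by
        intro f; ext y; simp
      rw [hc f₁, hc f₂, himg]
    have hjeq : j₁ = j₂ := hmono.injective (by rw [hfeq]; rw [hfeq] at hx; exact hx)
    have hpeq : π₁ = π₂ := by
      apply perm_eq_of_lt_iff
      intro i j
      rw [hf2 i j, hf2' i j, hfeq]
    subst hfeq; subst hjeq; subst hpeq; rfl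
  · rintro ⟨x, S⟩ hb
    simp only [mem_sigma, mem_univ, true_and, mem_powersetCard] at hb
    obtain ⟨hSsub, hScard⟩ := hb
    have hxS : x ∉ S := by
      intro hx
      have := hSsub hx
      simp only [badSet, mem_filter] at this
      rcases this.2 with ⟨h, _⟩ | ⟨h, _⟩ <;> exact absurd h (lt_irrefl x)
    have hcard : (insert x S).card = m + 1 := by
      rw [card_insert_of_notMem hxS, hScard]
    set f : Fin (m+1) → Fin n := ⇑((insert x S).orderEmbOfFin hcard) with hfdef
    have hmono : StrictMono f := OrderEmbedding.strictMono _
    have hrange : Set.range f = ↑(insert x S) := range_orderEmbOfFin _ hcard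
    have hximg : x ∈ Set.range f := by rw [hrange]; simp
    obtain ⟨j, hj⟩ := hximg
    have hfmem : ∀ i, f i ∈ insert x S := by
      intro i
      have : f i ∈ Set.range f := ⟨i, rfl⟩
      rwa [hrange, mem_coe] at this
    have hfS : ∀ i, i ≠ j → f i ∈ S := by
      intro i hij
      rcases mem_insert.1 (hfmem i) with h | h
      · exact absurd (hmono.injective (h.trans hj.symm)) hij
      · exact h
    have hbad : ∀ i, i ≠ j → f i ∈ badSet τ x := fun i hij => hSsub (hfS i hij)
    obtain ⟨π, hπ⟩ := exists_pattern (τ ∘ f) ((τ.injective.comp hmono.injective))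
    refine ⟨⟨π, j, f⟩, ?_, ?_⟩
    · simp only [mem_sigma, mem_product, mem_filter, mem_univ, true_and]
      refine ⟨⟨?_, ?_⟩, fun a b h => hmono h, fun a b => (hπ a b)⟩
      · intro i hij
        rw [hπ]
        have hmem := hbad i hij.ne
        simp only [badSet, mem_filter, mem_univ, true_and] at hmem
        have hlt : f i < x := hj ▸ hmono hij
        rcases hmem with ⟨_, h⟩ | ⟨h, _⟩
        · simpa [Function.comp, hj] using h
        · exact absurd h (asymm hlt)
      · intro i hij
        rw [hπ]
        have hmem := hbad i hij.ne'
        simp only [badSet, mem_filter, mem_univ, true_and] at hmem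
        have hlt : x < f i := hj ▸ hmono hij
        rcases hmem with ⟨h, _⟩ | ⟨_, h⟩
        · exact absurd h (asymm hlt)
        · simpa [Function.comp, hj] using h
    · simp only [Sigma.mk.inj_iff, heq_eq_eq]
      refine ⟨hj, ?_⟩
      rw [hj]
      have himg : univ.image f = insert x S := by
        apply coe_injective
        rw [← hrange, coe_image, coe_univ, Set.image_univ]
      rw [himg, erase_insert hxS]

lemma badSet_card_le {n : ℕ} (τ : Equiv.Perm (Fin n)) (x : Fin n) :
    (badSet τ x).card + 1 ≤ n := by
  have hsub : badSet τ x ⊆ univ.erase x := by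
    intro i hi
    simp only [badSet, mem_filter, mem_univ, true_and] at hi
    rcases hi with ⟨h, _⟩ | ⟨h, _⟩ <;> simp [mem_erase, h.ne, h.ne']
  have hle := card_le_card hsub
  rw [card_erase_of_mem (mem_univ x), card_univ, Fintype.card_fin] at hle
  have hn : 0 < n := x.pos
  omega

lemma badSet_empty_iff {n : ℕ} (τ : Equiv.Perm (Fin n)) (x : Fin n) :
    (badSet τ x).card = 0 ↔
      ((∀ i : Fin n, i < x → τ i < τ x) ∧ (∀ i : Fin n, x < i → τ x < τ i)) := by
  rw [card_eq_zero, badSet, filter_eq_empty_iff]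
  constructor
  · intro h
    constructor
    · intro i hi
      have := h (mem_univ i)
      have h1 : ¬ (τ x < τ i) := fun hc => this (Or.inl ⟨hi, hc⟩)
      have h2 : τ i ≠ τ x := fun hc => hi.ne (τ.injective hc)
      exact lt_of_le_of_ne (not_lt.1 h1) h2
    · intro i hi
      have := h (mem_univ i)
      have h1 : ¬ (τ i < τ x) := fun hc => this (Or.inr ⟨hi, hc⟩)
      have h2 : τ x ≠ τ i := fun hc => hi.ne (τ.injective hc)
      exact lt_of_le_of_ne (not_lt.1 h1) h2
  · rintro ⟨h1, h2⟩ i _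
    rintro (⟨hi, hc⟩ | ⟨hi, hc⟩)
    · exact absurd (h1 i hi) (asymm hc)
    · exact absurd (h2 i hi) (asymm hc)

/-- `sfix τ = ∑_π (-1)^{|π|-1} ssfix(π) occ(π, τ)`, summed over all nonempty
permutations `π`; patterns longer than `τ` contribute `0`, so the sum ranges over
sizes `m + 1 ∈ [1, n]`. -/
theorem sfix_expansion (n : ℕ) (τ : Equiv.Perm (Fin n)) :
    (sfix τ : ℤ) =
      ∑ m ∈ range n, ∑ π : Equiv.Perm (Fin (m + 1)),
        (-1 : ℤ) ^ m * (ssfix π : ℤ) * (occ π τ : ℤ) := by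
  classical
  have hstep : ∀ m ∈ range n, ∑ π : Equiv.Perm (Fin (m + 1)),
      (-1 : ℤ) ^ m * (ssfix π : ℤ) * (occ π τ : ℤ)
      = ∑ x : Fin n, (-1 : ℤ) ^ m * ((badSet τ x).card.choose m : ℤ) := by
    intro m _
    simp_rw [mul_assoc]
    rw [← mul_sum, ← mul_sum]
    congr 1
    have h1 : ∑ π : Equiv.Perm (Fin (m+1)), ((ssfix π : ℤ) * (occ π τ : ℤ))
        = ((∑ π : Equiv.Perm (Fin (m+1)), ssfix π * occ π τ : ℕ) : ℤ) := by
      push_cast; rfl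
    rw [h1, claimA τ m]
    push_cast
    simp [card_powersetCard]
  rw [Finset.sum_congr rfl hstep, Finset.sum_comm]
  have hx : ∀ x : Fin n, ∑ m ∈ range n, (-1 : ℤ) ^ m * ((badSet τ x).card.choose m : ℤ)
      = if (badSet τ x).card = 0 then 1 else 0 := by
    intro x
    set d := (badSet τ x).card with hd
    have hdn : d + 1 ≤ n := badSet_card_le τ x
    have hsub : range (d + 1) ⊆ range n := range_subset_range.2 hdn
    rw [← Finset.sum_subset hsub, Int.alternating_sum_range_choose]
    intro m _ hm
    rw [mem_range, not_lt] at hm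
    rw [Nat.choose_eq_zero_of_lt hm, Nat.cast_zero, mul_zero]
  rw [Finset.sum_congr rfl (fun x _ => hx x)]
  rw [sfix, card_filter]
  push_cast
  apply Finset.sum_congr rfl
  intro x _
  by_cases h : (∀ i : Fin n, i < x → τ i < τ x) ∧ (∀ i : Fin n, x < i → τ x < τ i)
  · rw [if_pos h, if_pos ((badSet_empty_iff τ x).2 h)]
  · rw [if_neg h, if_neg (fun hc => h ((badSet_empty_iff τ x).1 hc))]
end
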